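/- Let $W \in \mathcal{M}_{q,q}(\mathbb{C})$ with $\det(W + iI_q) \neq 0$, and define $\tilde{Z}^t = (W + iI_q)^{-1}[\,W - iI_q,\; 2Z\,] \in \mathcal{M}_{q, q+N}(\mathbb{C})$ (concatenation of blocks), for $Z \in \mathcal{M}_{q,N}(\mathbb{C})$. Then $\tilde{Z}^t\overline{\tilde{Z}^t}^{\,t} = I_q$ holds if and only if $\frac{1}{2i}(W - \overline{W}^t) = Z\overline{Z}^t$. That is, the generalized Cayley transform maps the BSD-model onto (a piece of) the Shilov boundary $S_{q+N, q}$. -/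

import Mathlib

open Matrix

/-- The generalized Cayley transform `Z̃ᵗ = (W + iI)⁻¹ [W - iI, 2Z]` lands in the
Shilov boundary `S_{q+N,q}` exactly when `(W, Z)` satisfies the BSD-model equation. -/
theorem stmt18 (q N : ℕ) (W : Matrix (Fin q) (Fin q) ℂ) (Z : Matrix (Fin q) (Fin N) ℂ)
    (hdet : (W + Complex.I • (1 : Matrix (Fin q) (Fin q) ℂ)).det ≠ 0) :
    ((W + Complex.I • 1)⁻¹ * Matrix.fromCols (W - Complex.I • 1) (2 • Z)) *
        ((W + Complex.I • 1)⁻¹ * Matrix.fromCols (W - Complex.I • 1) (2 • Z))ᴴ = 1 ↔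
      (1 / (2 * Complex.I)) • (W - Wᴴ) = Z * Zᴴ := by
  set A : Matrix (Fin q) (Fin q) ℂ := W + Complex.I • 1 with hA
  set B : Matrix (Fin q) (Fin q) ℂ := W - Complex.I • 1 with hB
  have hAunit : IsUnit A.det := isUnit_iff_ne_zero.mpr hdet
  have : Invertible A := A.invertibleOfIsUnitDet hAunit
  have hAH : Invertible Aᴴ := A.conjTranspose.invertibleOfIsUnitDet (by
    rw [det_conjTranspose]; exact hAunit.star)
  have hstep : (A⁻¹ * fromCols B (2 • Z)) * (A⁻¹ * fromCols B (2 • Z))ᴴ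
      = A⁻¹ * ((B * Bᴴ + ((2 • Z : Matrix (Fin q) (Fin N) ℂ)) *
          ((2 • Z : Matrix (Fin q) (Fin N) ℂ))ᴴ) * (Aᴴ)⁻¹) := by
    rw [conjTranspose_mul, conjTranspose_nonsing_inv,
      conjTranspose_fromCols_eq_fromRows_conjTranspose]
    rw [Matrix.mul_assoc, ← Matrix.mul_assoc (fromCols B (2 • Z)),
      fromCols_mul_fromRows]
  rw [hstep, inv_mul_eq_iff_eq_mul_of_invertible, Matrix.mul_one,
    mul_inv_eq_iff_eq_mul_of_invertible]
  have h4 : (2 • Z : Matrix (Fin q) (Fin N) ℂ) * (2 • Z : Matrix (Fin q) (Fin N) ℂ)ᴴ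
      = (4 : ℂ) • (Z * Zᴴ) := by
    ext i j
    simp only [Matrix.mul_apply, Matrix.smul_apply, Matrix.conjTranspose_apply,
      smul_eq_mul, Finset.mul_sum, nsmul_eq_mul, Nat.cast_ofNat, star_mul', star_ofNat]
    refine Finset.sum_congr rfl fun k _ => by ring
  rw [h4]
  have expand : A * Aᴴ - B * Bᴴ = (-(2 * Complex.I)) • (W - Wᴴ) := by
    simp only [hA, hB, conjTranspose_add, conjTranspose_sub, conjTranspose_smul,
      conjTranspose_one, Complex.star_def, Complex.conj_I, neg_smul]
    simp only [Matrix.add_mul, Matrix.mul_add, Matrix.sub_mul, Matrix.mul_sub,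
      smul_mul_assoc, mul_smul_comm, smul_smul, Complex.I_mul_I, mul_neg, smul_neg,
      neg_neg, neg_smul, one_smul, Matrix.mul_one, Matrix.one_mul, smul_sub, smul_add]
    module
  have hc : -(2 * Complex.I) = (4 : ℂ) * (1 / (2 * Complex.I)) := by
    have h : (2 * Complex.I) ≠ 0 := by simp [Complex.I_ne_zero]
    field_simp
    linear_combination (-4 : ℂ) * Complex.I_sq
  constructor
  · intro h
    have key : (4 : ℂ) • (Z * Zᴴ) = (-(2 * Complex.I)) • (W - Wᴴ) := by
      rw [← expand, ← h]; abel
    rw [hc, mul_smul] at key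
    exact (smul_right_injective (Matrix (Fin q) (Fin q) ℂ)
      (by norm_num : (4 : ℂ) ≠ 0) key).symm
  · intro h
    have key : (4 : ℂ) • (Z * Zᴴ) = (-(2 * Complex.I)) • (W - Wᴴ) := by
      rw [hc, mul_smul, h]
    rw [← expand] at key
    rw [key]; abel
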